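/- The regular reduction map is a Poisson map: let I_0,…,I_ℓ be a partition of {0,…,n} and let P_σ denote the orthogonal projection of ℝ^{n+1} onto the coordinates with indices in I_σ. At every point (x,y) ∈ ℝ^{n+1} × ℝ^{n+1} with P_σ x ≠ 0 for all σ (so in particular C1 = ⟨x,x⟩ ≠ 0), the functions ξ_σ = ‖P_σ x‖ and η_σ = ⟨P_σ x, P_σ y⟩/‖P_σ x‖ satisfy the Dirac bracket relations {ξ_σ, ξ_τ} = 0, {ξ_σ, η_τ} = δ_{στ} − ξ_σ·ξ_τ/C1, and {η_σ, η_τ} = (ξ_τ·η_σ − ξ_σ·η_τ)/C1, for all σ, τ ∈ {0,…,ℓ}. -/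

import Mathlib

noncomputable section

/-- The canonical Poisson bracket on `T*ℝ^N = ℝ^N × ℝ^N`:
`[f,g] = ∑ ν (∂f/∂x_ν · ∂g/∂y_ν − ∂f/∂y_ν · ∂g/∂x_ν)`. -/
def canPB {N : ℕ} (f g : (Fin N → ℝ) × (Fin N → ℝ) → ℝ)
    (p : (Fin N → ℝ) × (Fin N → ℝ)) : ℝ :=
  ∑ i : Fin N,
    ((fderiv ℝ f p) ((Pi.single i 1 : Fin N → ℝ), 0) *
        (fderiv ℝ g p) (0, (Pi.single i 1 : Fin N → ℝ))
      - (fderiv ℝ f p) (0, (Pi.single i 1 : Fin N → ℝ)) *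
        (fderiv ℝ g p) ((Pi.single i 1 : Fin N → ℝ), 0))

/-- The constraint function `C1(x,y) = ⟨x,x⟩`. -/
def C1fun {N : ℕ} (p : (Fin N → ℝ) × (Fin N → ℝ)) : ℝ := ∑ ν, p.1 ν * p.1 ν

/-- The constraint function `C2(x,y) = ⟨x,y⟩`. -/
def C2fun {N : ℕ} (p : (Fin N → ℝ) × (Fin N → ℝ)) : ℝ := ∑ ν, p.1 ν * p.2 ν

/-- The Dirac bracket
`{f,g} = [f,g] + (1/(2C1))·[f,C1]·[C2,g] − (1/(2C1))·[f,C2]·[C1,g]`. -/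
def diracPB {N : ℕ} (f g : (Fin N → ℝ) × (Fin N → ℝ) → ℝ)
    (p : (Fin N → ℝ) × (Fin N → ℝ)) : ℝ :=
  canPB f g p + (1 / (2 * C1fun p)) * canPB f C1fun p * canPB C2fun g p
    - (1 / (2 * C1fun p)) * canPB f C2fun p * canPB C1fun g p

open scoped Classical

/-- The orthogonal projection `P_σ` of `ℝ^{n+1}` onto the coordinates with indices in the
block `I_σ = part⁻¹(σ)` of the partition. -/
def Pproj {n ℓ : ℕ} (part : Fin (n + 1) → Fin (ℓ + 1)) (σ : Fin (ℓ + 1))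
    (x : Fin (n + 1) → ℝ) : Fin (n + 1) → ℝ :=
  fun i => if part i = σ then x i else 0

/-- `ξ_σ = ‖P_σ x‖` (Euclidean norm). -/
def xiFun {n ℓ : ℕ} (part : Fin (n + 1) → Fin (ℓ + 1)) (σ : Fin (ℓ + 1))
    (p : (Fin (n + 1) → ℝ) × (Fin (n + 1) → ℝ)) : ℝ :=
  Real.sqrt (∑ i, Pproj part σ p.1 i * Pproj part σ p.1 i)

/-- `η_σ = ⟨P_σ x, P_σ y⟩ / ‖P_σ x‖`. -/
def etaFun {n ℓ : ℕ} (part : Fin (n + 1) → Fin (ℓ + 1)) (σ : Fin (ℓ + 1))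
    (p : (Fin (n + 1) → ℝ) × (Fin (n + 1) → ℝ)) : ℝ :=
  (∑ i, Pproj part σ p.1 i * Pproj part σ p.2 i) / xiFun part σ p

section Aux
variable {n ℓ : ℕ}

def Xc (n : ℕ) (i : Fin (n+1)) : ((Fin (n+1) → ℝ) × (Fin (n+1) → ℝ)) →L[ℝ] ℝ :=
  (ContinuousLinearMap.proj i).comp (ContinuousLinearMap.fst ℝ _ _)
def Yc (n : ℕ) (i : Fin (n+1)) : ((Fin (n+1) → ℝ) × (Fin (n+1) → ℝ)) →L[ℝ] ℝ :=
  (ContinuousLinearMap.proj i).comp (ContinuousLinearMap.snd ℝ _ _)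

variable (part : Fin (n+1) → Fin (ℓ+1)) (σ : Fin (ℓ+1))
  (p : (Fin (n+1) → ℝ) × (Fin (n+1) → ℝ))

def LQ : ((Fin (n+1) → ℝ) × (Fin (n+1) → ℝ)) →L[ℝ] ℝ :=
  ∑ i, if part i = σ then (2 * p.1 i) • Xc n i else 0

def LB : ((Fin (n+1) → ℝ) × (Fin (n+1) → ℝ)) →L[ℝ] ℝ :=
  ∑ i, if part i = σ then p.2 i • Xc n i + p.1 i • Yc n i else 0

lemma hasF_Q : HasFDerivAt (fun q : (Fin (n+1) → ℝ) × (Fin (n+1) → ℝ) =>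
    ∑ i, Pproj part σ q.1 i * Pproj part σ q.1 i) (LQ part σ p) p := by
  have : ∀ q : (Fin (n+1) → ℝ) × (Fin (n+1) → ℝ),
      (∑ i, Pproj part σ q.1 i * Pproj part σ q.1 i)
        = ∑ i, (if part i = σ then q.1 i * q.1 i else 0) := by
    intro q; refine Finset.sum_congr rfl fun i _ => ?_
    by_cases h : part i = σ <;> simp [Pproj, h]
  simp only [this, LQ]
  refine HasFDerivAt.fun_sum fun i _ => ?_
  by_cases h : part i = σ
  · simp only [h, if_true]
    have := ((Xc n i).hasFDerivAt (x := p)).mul ((Xc n i).hasFDerivAt (x := p))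
    convert this using 1
    all_goals ext v <;> simp [Xc] <;> ring
  · simp only [h, if_false]
    exact hasFDerivAt_const 0 p

lemma hasF_B : HasFDerivAt (fun q : (Fin (n+1) → ℝ) × (Fin (n+1) → ℝ) =>
    ∑ i, Pproj part σ q.1 i * Pproj part σ q.2 i) (LB part σ p) p := by
  have : ∀ q : (Fin (n+1) → ℝ) × (Fin (n+1) → ℝ),
      (∑ i, Pproj part σ q.1 i * Pproj part σ q.2 i)
        = ∑ i, (if part i = σ then q.1 i * q.2 i else 0) := by
    intro q; refine Finset.sum_congr rfl fun i _ => ?_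
    by_cases h : part i = σ <;> simp [Pproj, h]
  simp only [this, LB]
  refine HasFDerivAt.fun_sum fun i _ => ?_
  by_cases h : part i = σ
  · simp only [h, if_true]
    have := ((Xc n i).hasFDerivAt (x := p)).mul ((Yc n i).hasFDerivAt (x := p))
    convert this using 1
    all_goals ext v <;> simp [Xc, Yc] <;> ring
  · simp only [h, if_false]
    exact hasFDerivAt_const 0 p

lemma Qpos (hp : Pproj part σ p.1 ≠ 0) :
    0 < ∑ i, Pproj part σ p.1 i * Pproj part σ p.1 i := by
  obtain ⟨i, hi⟩ := Function.ne_iff.mp hp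
  exact Finset.sum_pos' (fun j _ => mul_self_nonneg _)
    ⟨i, Finset.mem_univ i, mul_self_pos.mpr hi⟩

lemma xi_pos (hp : Pproj part σ p.1 ≠ 0) : 0 < xiFun part σ p :=
  Real.sqrt_pos.mpr (Qpos part σ p hp)

lemma xi_sq (hp : Pproj part σ p.1 ≠ 0) :
    xiFun part σ p * xiFun part σ p = ∑ i, Pproj part σ p.1 i * Pproj part σ p.1 i :=
  Real.mul_self_sqrt (Qpos part σ p hp).le

lemma hasF_xi (hp : Pproj part σ p.1 ≠ 0) :
    HasFDerivAt (xiFun part σ) ((1 / (2 * xiFun part σ p)) • LQ part σ p) p := by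
  have h := (Real.hasDerivAt_sqrt (Qpos part σ p hp).ne').comp_hasFDerivAt p
    (hasF_Q part σ p)
  exact h

lemma hasF_eta (hp : Pproj part σ p.1 ≠ 0) :
    HasFDerivAt (etaFun part σ)
      ((∑ i, Pproj part σ p.1 i * Pproj part σ p.2 i) •
          ((-((xiFun part σ p) ^ 2)⁻¹) • ((1 / (2 * xiFun part σ p)) • LQ part σ p))
        + (xiFun part σ p)⁻¹ • LB part σ p) p := by
  have hinv : HasFDerivAt (fun q => (xiFun part σ q)⁻¹)
      ((-((xiFun part σ p) ^ 2)⁻¹) • ((1 / (2 * xiFun part σ p)) • LQ part σ p)) p :=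
    (hasDerivAt_inv (xi_pos part σ p hp).ne').comp_hasFDerivAt p (hasF_xi part σ p hp)
  have := (hasF_B part σ p).mul hinv
  show HasFDerivAt (fun q => (∑ i, Pproj part σ q.1 i * Pproj part σ q.2 i) / xiFun part σ q) _ p
  simpa only [etaFun, div_eq_mul_inv, Pi.mul_def] using this

lemma LQ_apply1 (j : Fin (n+1)) :
    LQ part σ p (Pi.single j 1, 0) = if part j = σ then 2 * p.1 j else 0 := by
  simp only [LQ, ContinuousLinearMap.sum_apply]
  have h : ∀ i : Fin (n+1),
      ((if part i = σ then (2 * p.1 i) • Xc n i else 0)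
          ((Pi.single j 1 : Fin (n+1) → ℝ), (0 : Fin (n+1) → ℝ)))
        = if i = j then (if part i = σ then 2 * p.1 i else 0) else 0 := by
    intro i
    by_cases h2 : i = j
    · subst h2; by_cases h1 : part i = σ <;> simp [h1, Xc, Pi.single_apply]
    · simp [h2, Xc, Pi.single_apply, apply_ite (fun L : ((Fin (n+1) → ℝ) × (Fin (n+1) → ℝ)) →L[ℝ] ℝ => L (Pi.single j 1, 0))]
  rw [Finset.sum_congr rfl fun i _ => h i, Finset.sum_ite_eq' Finset.univ j]
  simp

lemma LQ_apply2 (j : Fin (n+1)) : LQ part σ p (0, Pi.single j 1) = 0 := by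
  simp only [LQ, ContinuousLinearMap.sum_apply]
  refine Finset.sum_eq_zero fun i _ => ?_
  by_cases h1 : part i = σ <;> simp [h1, Xc]

lemma LB_apply1 (j : Fin (n+1)) :
    LB part σ p (Pi.single j 1, 0) = if part j = σ then p.2 j else 0 := by
  simp only [LB, ContinuousLinearMap.sum_apply]
  have h : ∀ i : Fin (n+1),
      ((if part i = σ then p.2 i • Xc n i + p.1 i • Yc n i else 0)
          ((Pi.single j 1 : Fin (n+1) → ℝ), (0 : Fin (n+1) → ℝ)))
        = if i = j then (if part i = σ then p.2 i else 0) else 0 := by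
    intro i
    by_cases h2 : i = j
    · subst h2; by_cases h1 : part i = σ <;> simp [h1, Xc, Yc, Pi.single_apply]
    · simp [h2, Xc, Yc, Pi.single_apply, apply_ite (fun L : ((Fin (n+1) → ℝ) × (Fin (n+1) → ℝ)) →L[ℝ] ℝ => L (Pi.single j 1, 0))]
  rw [Finset.sum_congr rfl fun i _ => h i, Finset.sum_ite_eq' Finset.univ j]
  simp

lemma LB_apply2 (j : Fin (n+1)) :
    LB part σ p (0, Pi.single j 1) = if part j = σ then p.1 j else 0 := by
  simp only [LB, ContinuousLinearMap.sum_apply]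
  have h : ∀ i : Fin (n+1),
      ((if part i = σ then p.2 i • Xc n i + p.1 i • Yc n i else 0)
          ((0 : Fin (n+1) → ℝ), (Pi.single j 1 : Fin (n+1) → ℝ)))
        = if i = j then (if part i = σ then p.1 i else 0) else 0 := by
    intro i
    by_cases h2 : i = j
    · subst h2; by_cases h1 : part i = σ <;> simp [h1, Xc, Yc, Pi.single_apply]
    · simp [h2, Xc, Yc, Pi.single_apply, apply_ite (fun L : ((Fin (n+1) → ℝ) × (Fin (n+1) → ℝ)) →L[ℝ] ℝ => L ((0:Fin (n+1) → ℝ), Pi.single j 1))]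
  rw [Finset.sum_congr rfl fun i _ => h i, Finset.sum_ite_eq' Finset.univ j]
  simp

def LC1 : ((Fin (n+1) → ℝ) × (Fin (n+1) → ℝ)) →L[ℝ] ℝ := ∑ i, (2 * p.1 i) • Xc n i
def LC2 : ((Fin (n+1) → ℝ) × (Fin (n+1) → ℝ)) →L[ℝ] ℝ :=
  ∑ i, (p.2 i • Xc n i + p.1 i • Yc n i)

lemma hasF_C1 : HasFDerivAt C1fun (LC1 p) p := by
  unfold C1fun LC1
  refine HasFDerivAt.fun_sum fun i _ => ?_
  have := ((Xc n i).hasFDerivAt (x := p)).mul ((Xc n i).hasFDerivAt (x := p))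
  convert this using 1
  all_goals ext v <;> simp [Xc] <;> ring

lemma hasF_C2 : HasFDerivAt C2fun (LC2 p) p := by
  unfold C2fun LC2
  refine HasFDerivAt.fun_sum fun i _ => ?_
  have := ((Xc n i).hasFDerivAt (x := p)).mul ((Yc n i).hasFDerivAt (x := p))
  convert this using 1
  all_goals ext v <;> simp [Xc, Yc] <;> ring

lemma LC1_apply1 (j : Fin (n+1)) : LC1 p (Pi.single j 1, 0) = 2 * p.1 j := by
  simp only [LC1, ContinuousLinearMap.sum_apply]
  have h : ∀ i : Fin (n+1),
      (((2 * p.1 i) • Xc n i) ((Pi.single j 1 : Fin (n+1) → ℝ), (0 : Fin (n+1) → ℝ)))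
        = if i = j then 2 * p.1 i else 0 := by
    intro i
    by_cases h2 : i = j
    · subst h2; simp [Xc, Pi.single_apply]
    · simp [h2, Xc, Pi.single_apply]
  rw [Finset.sum_congr rfl fun i _ => h i, Finset.sum_ite_eq' Finset.univ j]
  simp

lemma LC1_apply2 (j : Fin (n+1)) : LC1 p (0, Pi.single j 1) = 0 := by
  simp only [LC1, ContinuousLinearMap.sum_apply]
  exact Finset.sum_eq_zero fun i _ => by simp [Xc]

lemma LC2_apply1 (j : Fin (n+1)) : LC2 p (Pi.single j 1, 0) = p.2 j := by
  simp only [LC2, ContinuousLinearMap.sum_apply]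
  have h : ∀ i : Fin (n+1),
      ((p.2 i • Xc n i + p.1 i • Yc n i) ((Pi.single j 1 : Fin (n+1) → ℝ), (0 : Fin (n+1) → ℝ)))
        = if i = j then p.2 i else 0 := by
    intro i
    by_cases h2 : i = j
    · subst h2; simp [Xc, Yc, Pi.single_apply]
    · simp [h2, Xc, Yc, Pi.single_apply]
  rw [Finset.sum_congr rfl fun i _ => h i, Finset.sum_ite_eq' Finset.univ j]
  simp

lemma LC2_apply2 (j : Fin (n+1)) : LC2 p (0, Pi.single j 1) = p.1 j := by
  simp only [LC2, ContinuousLinearMap.sum_apply]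
  have h : ∀ i : Fin (n+1),
      ((p.2 i • Xc n i + p.1 i • Yc n i) ((0 : Fin (n+1) → ℝ), (Pi.single j 1 : Fin (n+1) → ℝ)))
        = if i = j then p.1 i else 0 := by
    intro i
    by_cases h2 : i = j
    · subst h2; simp [Xc, Yc, Pi.single_apply]
    · simp [h2, Xc, Yc, Pi.single_apply]
  rw [Finset.sum_congr rfl fun i _ => h i, Finset.sum_ite_eq' Finset.univ j]
  simp

lemma dx_xi (hp : Pproj part σ p.1 ≠ 0) (j : Fin (n+1)) :
    fderiv ℝ (xiFun part σ) p (Pi.single j 1, 0)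
      = if part j = σ then p.1 j / xiFun part σ p else 0 := by
  rw [(hasF_xi part σ p hp).fderiv, ContinuousLinearMap.smul_apply, LQ_apply1,
    smul_eq_mul]
  have hξ := (xi_pos part σ p hp).ne'
  split_ifs
  · field_simp
  · simp

lemma dy_xi (hp : Pproj part σ p.1 ≠ 0) (j : Fin (n+1)) :
    fderiv ℝ (xiFun part σ) p (0, Pi.single j 1) = 0 := by
  rw [(hasF_xi part σ p hp).fderiv, ContinuousLinearMap.smul_apply, LQ_apply2,
    smul_eq_mul, mul_zero]

lemma dx_eta (hp : Pproj part σ p.1 ≠ 0) (j : Fin (n+1)) :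
    fderiv ℝ (etaFun part σ) p (Pi.single j 1, 0)
      = if part j = σ then
          p.2 j / xiFun part σ p
            - (∑ i, Pproj part σ p.1 i * Pproj part σ p.2 i) * p.1 j / xiFun part σ p ^ 3
        else 0 := by
  rw [(hasF_eta part σ p hp).fderiv, ContinuousLinearMap.add_apply,
    ContinuousLinearMap.smul_apply, ContinuousLinearMap.smul_apply,
    ContinuousLinearMap.smul_apply, ContinuousLinearMap.smul_apply, LQ_apply1, LB_apply1]
  have hξ := (xi_pos part σ p hp).ne'
  simp only [smul_eq_mul]
  split_ifs
  · field_simp; ring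
  · simp

lemma dy_eta (hp : Pproj part σ p.1 ≠ 0) (j : Fin (n+1)) :
    fderiv ℝ (etaFun part σ) p (0, Pi.single j 1)
      = if part j = σ then p.1 j / xiFun part σ p else 0 := by
  rw [(hasF_eta part σ p hp).fderiv, ContinuousLinearMap.add_apply,
    ContinuousLinearMap.smul_apply, ContinuousLinearMap.smul_apply,
    ContinuousLinearMap.smul_apply, ContinuousLinearMap.smul_apply, LQ_apply2, LB_apply2]
  have hξ := (xi_pos part σ p hp).ne'
  simp only [smul_eq_mul, mul_zero, zero_add]
  split_ifs
  · field_simp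
  · simp

lemma dx_C1 (j : Fin (n+1)) :
    fderiv ℝ C1fun p (Pi.single j 1, 0) = 2 * p.1 j := by
  rw [(hasF_C1 p).fderiv, LC1_apply1]

lemma dy_C1 (j : Fin (n+1)) : fderiv ℝ C1fun p (0, Pi.single j 1) = 0 := by
  rw [(hasF_C1 p).fderiv, LC1_apply2]

lemma dx_C2 (j : Fin (n+1)) :
    fderiv ℝ C2fun p (Pi.single j 1, 0) = p.2 j := by
  rw [(hasF_C2 p).fderiv, LC2_apply1]

lemma dy_C2 (j : Fin (n+1)) : fderiv ℝ C2fun p (0, Pi.single j 1) = p.1 j := by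
  rw [(hasF_C2 p).fderiv, LC2_apply2]

lemma Qite : (∑ i, Pproj part σ p.1 i * Pproj part σ p.1 i)
    = ∑ i, (if part i = σ then p.1 i * p.1 i else 0) :=
  Finset.sum_congr rfl fun i _ => by by_cases h : part i = σ <;> simp [Pproj, h]

lemma Bite : (∑ i, Pproj part σ p.1 i * Pproj part σ p.2 i)
    = ∑ i, (if part i = σ then p.1 i * p.2 i else 0) :=
  Finset.sum_congr rfl fun i _ => by by_cases h : part i = σ <;> simp [Pproj, h]

variable (τ : Fin (ℓ+1))

lemma can_xi_xi (hσ : Pproj part σ p.1 ≠ 0) (hτ : Pproj part τ p.1 ≠ 0) :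
    canPB (xiFun part σ) (xiFun part τ) p = 0 := by
  unfold canPB
  refine Finset.sum_eq_zero fun j _ => ?_
  rw [dx_xi part σ p hσ, dy_xi part σ p hσ, dx_xi part τ p hτ, dy_xi part τ p hτ]
  ring

lemma can_xi_C1 (hσ : Pproj part σ p.1 ≠ 0) :
    canPB (xiFun part σ) C1fun p = 0 := by
  unfold canPB
  refine Finset.sum_eq_zero fun j _ => ?_
  rw [dx_xi part σ p hσ, dy_xi part σ p hσ, dx_C1, dy_C1]
  ring

lemma can_C1_xi (hτ : Pproj part τ p.1 ≠ 0) :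
    canPB C1fun (xiFun part τ) p = 0 := by
  unfold canPB
  refine Finset.sum_eq_zero fun j _ => ?_
  rw [dx_xi part τ p hτ, dy_xi part τ p hτ, dx_C1, dy_C1]
  ring

lemma can_xi_C2 (hσ : Pproj part σ p.1 ≠ 0) :
    canPB (xiFun part σ) C2fun p = xiFun part σ p := by
  have hξ := (xi_pos part σ p hσ).ne'
  unfold canPB
  calc ∑ j, ((fderiv ℝ (xiFun part σ) p) (Pi.single j 1, 0) * (fderiv ℝ C2fun p) (0, Pi.single j 1)
        - (fderiv ℝ (xiFun part σ) p) (0, Pi.single j 1) * (fderiv ℝ C2fun p) (Pi.single j 1, 0))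
      = ∑ j, (if part j = σ then p.1 j * p.1 j else 0) * (1 / xiFun part σ p) := by
        refine Finset.sum_congr rfl fun j _ => ?_
        rw [dx_xi part σ p hσ, dy_xi part σ p hσ, dx_C2, dy_C2]
        split_ifs <;> ring
    _ = (∑ j, if part j = σ then p.1 j * p.1 j else 0) * (1 / xiFun part σ p) :=
        (Finset.sum_mul _ _ _).symm
    _ = (xiFun part σ p * xiFun part σ p) * (1 / xiFun part σ p) := by
        rw [← Qite, ← xi_sq part σ p hσ]
    _ = xiFun part σ p := by field_simp

lemma can_C2_xi (hτ : Pproj part τ p.1 ≠ 0) :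
    canPB C2fun (xiFun part τ) p = -xiFun part τ p := by
  have hξ := (xi_pos part τ p hτ).ne'
  unfold canPB
  calc ∑ j, ((fderiv ℝ C2fun p) (Pi.single j 1, 0) * (fderiv ℝ (xiFun part τ) p) (0, Pi.single j 1)
        - (fderiv ℝ C2fun p) (0, Pi.single j 1) * (fderiv ℝ (xiFun part τ) p) (Pi.single j 1, 0))
      = ∑ j, (if part j = τ then p.1 j * p.1 j else 0) * (-(1 / xiFun part τ p)) := by
        refine Finset.sum_congr rfl fun j _ => ?_
        rw [dx_xi part τ p hτ, dy_xi part τ p hτ, dx_C2, dy_C2]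
        split_ifs <;> ring
    _ = (∑ j, if part j = τ then p.1 j * p.1 j else 0) * (-(1 / xiFun part τ p)) :=
        (Finset.sum_mul _ _ _).symm
    _ = (xiFun part τ p * xiFun part τ p) * (-(1 / xiFun part τ p)) := by
        rw [← Qite, ← xi_sq part τ p hτ]
    _ = -xiFun part τ p := by field_simp

lemma can_xi_eta (hσ : Pproj part σ p.1 ≠ 0) (hτ : Pproj part τ p.1 ≠ 0) :
    canPB (xiFun part σ) (etaFun part τ) p = if σ = τ then 1 else 0 := by
  unfold canPB
  by_cases hστ : σ = τ
  · subst hστ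
    rw [if_pos rfl]
    have hξ := (xi_pos part σ p hσ).ne'
    calc ∑ j, ((fderiv ℝ (xiFun part σ) p) (Pi.single j 1, 0) * (fderiv ℝ (etaFun part σ) p) (0, Pi.single j 1)
          - (fderiv ℝ (xiFun part σ) p) (0, Pi.single j 1) * (fderiv ℝ (etaFun part σ) p) (Pi.single j 1, 0))
        = ∑ j, (if part j = σ then p.1 j * p.1 j else 0) * (1 / (xiFun part σ p * xiFun part σ p)) := by
          refine Finset.sum_congr rfl fun j _ => ?_
          rw [dx_xi part σ p hσ, dy_xi part σ p hσ, dx_eta part σ p hσ, dy_eta part σ p hσ]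
          split_ifs <;> ring
      _ = (∑ j, if part j = σ then p.1 j * p.1 j else 0) * (1 / (xiFun part σ p * xiFun part σ p)) :=
          (Finset.sum_mul _ _ _).symm
      _ = (xiFun part σ p * xiFun part σ p) * (1 / (xiFun part σ p * xiFun part σ p)) := by
          rw [← Qite, ← xi_sq part σ p hσ]
      _ = 1 := by field_simp
  · rw [if_neg hστ]
    refine Finset.sum_eq_zero fun j _ => ?_
    rw [dx_xi part σ p hσ, dy_xi part σ p hσ, dx_eta part τ p hτ, dy_eta part τ p hτ]
    split_ifs with h1 h2
    · exact absurd (h1.symm.trans h2) hστ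
    all_goals ring

lemma can_C1_eta (hτ : Pproj part τ p.1 ≠ 0) :
    canPB C1fun (etaFun part τ) p = 2 * xiFun part τ p := by
  have hξ := (xi_pos part τ p hτ).ne'
  unfold canPB
  calc ∑ j, ((fderiv ℝ C1fun p) (Pi.single j 1, 0) * (fderiv ℝ (etaFun part τ) p) (0, Pi.single j 1)
        - (fderiv ℝ C1fun p) (0, Pi.single j 1) * (fderiv ℝ (etaFun part τ) p) (Pi.single j 1, 0))
      = ∑ j, (if part j = τ then p.1 j * p.1 j else 0) * (2 / xiFun part τ p) := by
        refine Finset.sum_congr rfl fun j _ => ?_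
        rw [dx_eta part τ p hτ, dy_eta part τ p hτ, dx_C1, dy_C1]
        split_ifs <;> ring
    _ = (∑ j, if part j = τ then p.1 j * p.1 j else 0) * (2 / xiFun part τ p) :=
        (Finset.sum_mul _ _ _).symm
    _ = (xiFun part τ p * xiFun part τ p) * (2 / xiFun part τ p) := by
        rw [← Qite, ← xi_sq part τ p hτ]
    _ = 2 * xiFun part τ p := by field_simp

lemma can_eta_C1 (hσ : Pproj part σ p.1 ≠ 0) :
    canPB (etaFun part σ) C1fun p = -(2 * xiFun part σ p) := by
  have hξ := (xi_pos part σ p hσ).ne'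
  unfold canPB
  calc ∑ j, ((fderiv ℝ (etaFun part σ) p) (Pi.single j 1, 0) * (fderiv ℝ C1fun p) (0, Pi.single j 1)
        - (fderiv ℝ (etaFun part σ) p) (0, Pi.single j 1) * (fderiv ℝ C1fun p) (Pi.single j 1, 0))
      = ∑ j, (if part j = σ then p.1 j * p.1 j else 0) * (-(2 / xiFun part σ p)) := by
        refine Finset.sum_congr rfl fun j _ => ?_
        rw [dx_eta part σ p hσ, dy_eta part σ p hσ, dx_C1, dy_C1]
        split_ifs <;> ring
    _ = (∑ j, if part j = σ then p.1 j * p.1 j else 0) * (-(2 / xiFun part σ p)) :=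
        (Finset.sum_mul _ _ _).symm
    _ = (xiFun part σ p * xiFun part σ p) * (-(2 / xiFun part σ p)) := by
        rw [← Qite, ← xi_sq part σ p hσ]
    _ = -(2 * xiFun part σ p) := by field_simp

lemma can_C2_eta (hτ : Pproj part τ p.1 ≠ 0) :
    canPB C2fun (etaFun part τ) p = etaFun part τ p := by
  have hξ := (xi_pos part τ p hτ).ne'
  unfold canPB
  calc ∑ j, ((fderiv ℝ C2fun p) (Pi.single j 1, 0) * (fderiv ℝ (etaFun part τ) p) (0, Pi.single j 1)
        - (fderiv ℝ C2fun p) (0, Pi.single j 1) * (fderiv ℝ (etaFun part τ) p) (Pi.single j 1, 0))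
      = ∑ j, (if part j = τ then p.1 j * p.1 j else 0) *
          ((∑ i, Pproj part τ p.1 i * Pproj part τ p.2 i) / xiFun part τ p ^ 3) := by
        refine Finset.sum_congr rfl fun j _ => ?_
        rw [dx_eta part τ p hτ, dy_eta part τ p hτ, dx_C2, dy_C2]
        split_ifs <;> ring
    _ = (∑ j, if part j = τ then p.1 j * p.1 j else 0) *
          ((∑ i, Pproj part τ p.1 i * Pproj part τ p.2 i) / xiFun part τ p ^ 3) :=
        (Finset.sum_mul _ _ _).symm
    _ = (xiFun part τ p * xiFun part τ p) *
          ((∑ i, Pproj part τ p.1 i * Pproj part τ p.2 i) / xiFun part τ p ^ 3) := by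
        rw [← Qite, ← xi_sq part τ p hτ]
    _ = etaFun part τ p := by rw [etaFun]; field_simp

lemma can_eta_C2 (hσ : Pproj part σ p.1 ≠ 0) :
    canPB (etaFun part σ) C2fun p = -etaFun part σ p := by
  have hξ := (xi_pos part σ p hσ).ne'
  unfold canPB
  calc ∑ j, ((fderiv ℝ (etaFun part σ) p) (Pi.single j 1, 0) * (fderiv ℝ C2fun p) (0, Pi.single j 1)
        - (fderiv ℝ (etaFun part σ) p) (0, Pi.single j 1) * (fderiv ℝ C2fun p) (Pi.single j 1, 0))
      = ∑ j, (if part j = σ then p.1 j * p.1 j else 0) *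
          (-((∑ i, Pproj part σ p.1 i * Pproj part σ p.2 i) / xiFun part σ p ^ 3)) := by
        refine Finset.sum_congr rfl fun j _ => ?_
        rw [dx_eta part σ p hσ, dy_eta part σ p hσ, dx_C2, dy_C2]
        split_ifs <;> ring
    _ = (∑ j, if part j = σ then p.1 j * p.1 j else 0) *
          (-((∑ i, Pproj part σ p.1 i * Pproj part σ p.2 i) / xiFun part σ p ^ 3)) :=
        (Finset.sum_mul _ _ _).symm
    _ = (xiFun part σ p * xiFun part σ p) *
          (-((∑ i, Pproj part σ p.1 i * Pproj part σ p.2 i) / xiFun part σ p ^ 3)) := by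
        rw [← Qite, ← xi_sq part σ p hσ]
    _ = -etaFun part σ p := by rw [etaFun]; field_simp

lemma can_eta_eta (hσ : Pproj part σ p.1 ≠ 0) (hτ : Pproj part τ p.1 ≠ 0) :
    canPB (etaFun part σ) (etaFun part τ) p = 0 := by
  unfold canPB
  refine Finset.sum_eq_zero fun j _ => ?_
  rw [dx_eta part σ p hσ, dy_eta part σ p hσ, dx_eta part τ p hτ, dy_eta part τ p hτ]
  by_cases hστ : σ = τ
  · subst hστ; split_ifs <;> ring
  · split_ifs with h1 h2
    · exact absurd (h1.symm.trans h2) hστ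
    all_goals ring

lemma C1pos (hσ : Pproj part σ p.1 ≠ 0) : 0 < C1fun p := by
  have hx : p.1 ≠ 0 := by
    intro h; apply hσ; funext i; simp [Pproj, h]
  obtain ⟨i, hi⟩ := Function.ne_iff.mp hx
  exact Finset.sum_pos' (fun j _ => mul_self_nonneg _)
    ⟨i, Finset.mem_univ i, mul_self_pos.mpr hi⟩


end Aux


/-- **The regular reduction map is a Poisson map.**
For a partition of `{0,…,n}` into blocks `I_0,…,I_ℓ` (encoded by the surjective block map
`part`), at every point with `P_σ x ≠ 0` for all `σ`, the functions `ξ_σ = ‖P_σ x‖` and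
`η_σ = ⟨P_σ x, P_σ y⟩/‖P_σ x‖` satisfy the Dirac bracket relations
`{ξ_σ, ξ_τ} = 0`, `{ξ_σ, η_τ} = δ_{στ} − ξ_σ ξ_τ / C1`,
`{η_σ, η_τ} = (ξ_τ η_σ − ξ_σ η_τ)/C1`. -/
theorem stmt12 (n ℓ : ℕ) (part : Fin (n + 1) → Fin (ℓ + 1))
    (hpart : Function.Surjective part)
    (p : (Fin (n + 1) → ℝ) × (Fin (n + 1) → ℝ))
    (hp : ∀ σ, Pproj part σ p.1 ≠ 0) (σ τ : Fin (ℓ + 1)) :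
    diracPB (xiFun part σ) (xiFun part τ) p = 0 ∧
    diracPB (xiFun part σ) (etaFun part τ) p
      = (if σ = τ then 1 else 0) - xiFun part σ p * xiFun part τ p / C1fun p ∧
    diracPB (etaFun part σ) (etaFun part τ) p
      = (xiFun part τ p * etaFun part σ p - xiFun part σ p * etaFun part τ p) / C1fun p := by
  have hσ := hp σ
  have hτ := hp τ
  have hC1 := (C1pos part σ p hσ).ne'
  refine ⟨?_, ?_, ?_⟩
  · rw [diracPB, can_xi_xi part σ p τ hσ hτ, can_xi_C1 part σ p hσ,
      can_C2_xi part p τ hτ, can_xi_C2 part σ p hσ, can_C1_xi part p τ hτ]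
    ring
  · rw [diracPB, can_xi_eta part σ p τ hσ hτ, can_xi_C1 part σ p hσ,
      can_C2_eta part p τ hτ, can_xi_C2 part σ p hσ, can_C1_eta part p τ hτ]
    field_simp
    split_ifs <;> ring
  · rw [diracPB, can_eta_eta part σ p τ hσ hτ, can_eta_C1 part σ p hσ,
      can_C2_eta part p τ hτ, can_eta_C2 part σ p hσ, can_C1_eta part p τ hτ]
    field_simp
    ring
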